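/- Superposition rule for the Riccati equation: let b₀, b₁, b₂ : ℝ → ℝ, let I ⊆ ℝ be an open interval, and let x₁, x₂, x₃ : I → ℝ be three differentiable solutions of the Riccati equation x' = b₀(t) + b₁(t)x + b₂(t)x². Fix ρ ∈ ℝ and suppose that (x₃(t) − x₁(t)) + ρ(x₁(t) − x₂(t)) ≠ 0 for all t ∈ I. Then the function x(t) = (x₂(t)(x₃(t) − x₁(t)) + ρ x₃(t)(x₁(t) − x₂(t))) / ((x₃(t) − x₁(t)) + ρ(x₁(t) − x₂(t))) is differentiable on I and is also a solution of the Riccati equation x' = b₀(t) + b₁(t)x + b₂(t)x² on I. -/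

import Mathlib

/-- Superposition rule for the Riccati equation: given three solutions
`x₁, x₂, x₃` of `x' = b₀(t) + b₁(t) x + b₂(t) x²` on an open interval `(a, b)`, and a
constant `ρ` for which the denominator never vanishes, the superposition
`x = (x₂ (x₃ − x₁) + ρ x₃ (x₁ − x₂)) / ((x₃ − x₁) + ρ (x₁ − x₂))`
is again a (differentiable) solution of the Riccati equation on `(a, b)`. -/
theorem riccati_superposition_rule
    (b₀ b₁ b₂ : ℝ → ℝ) (a b : ℝ)
    (x₁ x₂ x₃ : ℝ → ℝ)
    (h₁ : ∀ t ∈ Set.Ioo a b, HasDerivAt x₁ (b₀ t + b₁ t * x₁ t + b₂ t * x₁ t ^ 2) t)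
    (h₂ : ∀ t ∈ Set.Ioo a b, HasDerivAt x₂ (b₀ t + b₁ t * x₂ t + b₂ t * x₂ t ^ 2) t)
    (h₃ : ∀ t ∈ Set.Ioo a b, HasDerivAt x₃ (b₀ t + b₁ t * x₃ t + b₂ t * x₃ t ^ 2) t)
    (ρ : ℝ)
    (hden : ∀ t ∈ Set.Ioo a b, (x₃ t - x₁ t) + ρ * (x₁ t - x₂ t) ≠ 0)
    (x : ℝ → ℝ)
    (hx : ∀ t : ℝ, x t = (x₂ t * (x₃ t - x₁ t) + ρ * x₃ t * (x₁ t - x₂ t)) /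
      ((x₃ t - x₁ t) + ρ * (x₁ t - x₂ t))) :
    ∀ t ∈ Set.Ioo a b, HasDerivAt x (b₀ t + b₁ t * x t + b₂ t * x t ^ 2) t := by
  intro t ht
  have hd₁ := h₁ t ht
  have hd₂ := h₂ t ht
  have hd₃ := h₃ t ht
  have hD := hden t ht
  set d₁ := b₀ t + b₁ t * x₁ t + b₂ t * x₁ t ^ 2 with hd1
  set d₂ := b₀ t + b₁ t * x₂ t + b₂ t * x₂ t ^ 2 with hd2
  set d₃ := b₀ t + b₁ t * x₃ t + b₂ t * x₃ t ^ 2 with hd3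
  have hN : HasDerivAt (fun s => x₂ s * (x₃ s - x₁ s) + ρ * x₃ s * (x₁ s - x₂ s))
      (d₂ * (x₃ t - x₁ t) + x₂ t * (d₃ - d₁) +
        (ρ * d₃ * (x₁ t - x₂ t) + ρ * x₃ t * (d₁ - d₂))) t := by
    exact (hd₂.mul (hd₃.sub hd₁)).add (((hd₃.const_mul ρ).mul (hd₁.sub hd₂)))
  have hDen : HasDerivAt (fun s => (x₃ s - x₁ s) + ρ * (x₁ s - x₂ s))
      ((d₃ - d₁) + ρ * (d₁ - d₂)) t := by
    exact (hd₃.sub hd₁).add ((hd₁.sub hd₂).const_mul ρ)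
  have hxeq : x = fun s => (x₂ s * (x₃ s - x₁ s) + ρ * x₃ s * (x₁ s - x₂ s)) /
      ((x₃ s - x₁ s) + ρ * (x₁ s - x₂ s)) := funext hx
  rw [hxeq]
  have hdiv := hN.div hDen hD
  refine hdiv.congr_deriv ?_
  field_simp
  rw [hd1, hd2, hd3]
  ring
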